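/- There exists a pair of orthogonal 6-cycle systems of order 21: two partitions of the edge set of the complete graph K_21 into cycles of length 6 such that any cycle of the first partition and any cycle of the second partition share at most one edge. -/

import Mathlib

/-- A set of edges `C` forms a cycle of length `l`: there is a graph and a closed walk
which is a cycle, has length `l`, and whose edge set is exactly `C`. -/
def IsCycleEdgeSet {V : Type*} (l : ℕ) (C : Set (Sym2 V)) : Prop :=
  ∃ (G : SimpleGraph V) (x : V) (w : G.Walk x x),
    w.IsCycle ∧ w.length = l ∧ C = {e | e ∈ w.edges}

/-- `D` is a decomposition of the edge set of `G` into cycles of length `l`: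
each member of `D` is the edge set of an `l`-cycle contained in `G`, and every
edge of `G` lies in exactly one member of `D`. -/
def IsCycleDecomposition {V : Type*} (G : SimpleGraph V) (l : ℕ)
    (D : Set (Set (Sym2 V))) : Prop :=
  (∀ C ∈ D, IsCycleEdgeSet l C ∧ C ⊆ G.edgeSet) ∧
  (∀ e ∈ G.edgeSet, ∃! C, C ∈ D ∧ e ∈ C)

/-- Two cycle decompositions are orthogonal if any member of the first and any member
of the second share at most one edge. -/
def OrthogonalDecompositions {V : Type*} (D₁ D₂ : Set (Set (Sym2 V))) : Prop :=
  ∀ C₁ ∈ D₁, ∀ C₂ ∈ D₂, (C₁ ∩ C₂).Subsingleton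

/- ### Auxiliary definitions -/

abbrev V6 : Type := Fin 21 × Fin 21 × Fin 21 × Fin 21 × Fin 21 × Fin 21

def epairs (t : V6) : List (Fin 21 × Fin 21) :=
  [(t.1, t.2.1), (t.2.1, t.2.2.1), (t.2.2.1, t.2.2.2.1),
   (t.2.2.2.1, t.2.2.2.2.1), (t.2.2.2.2.1, t.2.2.2.2.2), (t.2.2.2.2.2, t.1)]

def cycL (t : V6) : List (Sym2 (Fin 21)) := (epairs t).map (fun p => s(p.1, p.2))

def vlist (t : V6) : List (Fin 21) :=
  [t.1, t.2.1, t.2.2.1, t.2.2.2.1, t.2.2.2.2.1, t.2.2.2.2.2]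

def cycSet (t : V6) : Set (Sym2 (Fin 21)) := {e | e ∈ cycL t}

def pe (x y u v : Fin 21) : Bool := (x == u && y == v) || (x == v && y == u)

def memP (x y : Fin 21) (t : V6) : Bool :=
  pe x y t.1 t.2.1 || pe x y t.2.1 t.2.2.1 || pe x y t.2.2.1 t.2.2.2.1 ||
  pe x y t.2.2.2.1 t.2.2.2.2.1 || pe x y t.2.2.2.2.1 t.2.2.2.2.2 || pe x y t.2.2.2.2.2 t.1

lemma mem_cycL_iff (x y : Fin 21) (t : V6) : s(x, y) ∈ cycL t ↔ memP x y t = true := by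
  obtain ⟨a, b, c, d, e, f⟩ := t
  simp [cycL, epairs, memP, pe, Sym2.eq_iff, beq_iff_eq, and_comm, or_assoc]

lemma isCycleEdgeSet_cyc (t : V6) (h : (vlist t).Nodup) :
    IsCycleEdgeSet 6 (cycSet t) := by
  obtain ⟨a, b, c, d, e, f⟩ := t
  simp only [vlist, List.nodup_cons, List.mem_cons, List.mem_singleton,
    List.not_mem_nil, or_false, not_or, List.nodup_nil, and_true] at h
  obtain ⟨⟨hab, hac, had, hae, haf⟩, ⟨hbc, hbd, hbe, hbf⟩, ⟨hcd, hce, hcf⟩,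
    ⟨hde, hdf⟩, hef, -⟩ := h
  refine ⟨⊤, a,
    .cons (by simpa using hab) (.cons (by simpa using hbc) (.cons (by simpa using hcd)
      (.cons (by simpa using hde) (.cons (by simpa using hef)
      (.cons (by simpa using (Ne.symm haf)) .nil))))), ?_, by simp, ?_⟩
  · rw [SimpleGraph.Walk.isCycle_def]
    refine ⟨?_, by simp, ?_⟩
    · rw [SimpleGraph.Walk.isTrail_def]
      simp only [SimpleGraph.Walk.edges_cons, SimpleGraph.Walk.edges_nil,
        List.nodup_cons, List.mem_cons, List.not_mem_nil, or_false, not_or,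
        List.nodup_nil, and_true, Sym2.eq_iff]
      tauto
    · simp only [SimpleGraph.Walk.support_cons, SimpleGraph.Walk.support_nil, List.tail_cons]
      simp only [List.nodup_cons, List.mem_cons, List.not_mem_nil, or_false, not_or,
        List.nodup_nil, and_true, List.mem_singleton]
      exact ⟨⟨hbc, hbd, hbe, hbf, Ne.symm hab⟩, ⟨hcd, hce, hcf, Ne.symm hac⟩,
        ⟨hde, hdf, Ne.symm had⟩, ⟨hef, Ne.symm hae⟩, Ne.symm haf, not_false⟩
  · simp [cycSet, cycL, epairs]

/-- Two distinct members force length at least two. -/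
lemma two_le_length_of_mem {α : Type*} [DecidableEq α] {l : List α} {a b : α}
    (ha : a ∈ l) (hb : b ∈ l) (hne : a ≠ b) : 2 ≤ l.length := by
  have hb' : b ∈ l.erase a := (List.mem_erase_of_ne (Ne.symm hne)).mpr hb
  have h1 : 0 < (l.erase a).length := List.length_pos_of_mem hb'
  have := List.length_erase_of_mem ha
  omega

def distinctB (t : V6) : Bool :=
  t.1 != t.2.1 && t.1 != t.2.2.1 && t.1 != t.2.2.2.1 && t.1 != t.2.2.2.2.1 &&
  t.1 != t.2.2.2.2.2 && t.2.1 != t.2.2.1 && t.2.1 != t.2.2.2.1 && t.2.1 != t.2.2.2.2.1 &&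
  t.2.1 != t.2.2.2.2.2 && t.2.2.1 != t.2.2.2.1 && t.2.2.1 != t.2.2.2.2.1 &&
  t.2.2.1 != t.2.2.2.2.2 && t.2.2.2.1 != t.2.2.2.2.1 && t.2.2.2.1 != t.2.2.2.2.2 &&
  t.2.2.2.2.1 != t.2.2.2.2.2

lemma vlist_nodup_of (t : V6) (h : distinctB t = true) : (vlist t).Nodup := by
  obtain ⟨a, b, c, d, e, f⟩ := t
  simp only [distinctB, Bool.and_eq_true, bne_iff_ne, ne_eq] at h
  simp only [vlist, List.nodup_cons, List.mem_cons, List.mem_singleton,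
    List.not_mem_nil, or_false, not_or, List.nodup_nil, and_true]
  tauto

lemma unique_of_countP_eq_one {α : Type*} [DecidableEq α] {l : List α} {p : α → Bool}
    (h : l.countP p = 1) {a b : α} (ha : a ∈ l) (hb : b ∈ l)
    (hpa : p a) (hpb : p b) : a = b := by
  by_contra hne
  have ha' : a ∈ l.filter p := List.mem_filter.mpr ⟨ha, hpa⟩
  have hb' : b ∈ l.filter p := List.mem_filter.mpr ⟨hb, hpb⟩
  have h2 := two_le_length_of_mem ha' hb' hne
  rw [← List.countP_eq_length_filter, h] at h2
  omega

lemma exists_of_countP_eq_one {α : Type*} {l : List α} {p : α → Bool}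
    (h : l.countP p = 1) : ∃ a ∈ l, p a := by
  have : 0 < l.countP p := by omega
  simpa using List.countP_pos_iff.mp this
def T1 : List V6 := [
  (0, 1, 7, 8, 14, 15),
  (0, 2, 7, 9, 14, 16),
  (1, 2, 8, 9, 15, 16),
  (1, 3, 8, 10, 15, 17),
  (2, 3, 9, 10, 16, 17),
  (2, 4, 9, 11, 16, 18),
  (3, 4, 10, 11, 17, 18),
  (3, 5, 10, 12, 17, 19),
  (4, 5, 11, 12, 18, 19),
  (4, 6, 11, 13, 18, 20),
  (5, 6, 12, 13, 19, 20),
  (5, 7, 12, 14, 19, 0),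
  (6, 7, 13, 14, 20, 0),
  (6, 8, 13, 15, 20, 1),
  (0, 3, 7, 14, 1, 10),
  (1, 4, 8, 15, 2, 11),
  (2, 5, 9, 16, 3, 12),
  (3, 6, 10, 17, 4, 13),
  (4, 7, 11, 18, 5, 14),
  (5, 8, 12, 19, 6, 15),
  (6, 9, 13, 20, 7, 16),
  (7, 10, 14, 0, 8, 17),
  (8, 11, 15, 1, 9, 18),
  (9, 12, 16, 2, 10, 19),
  (10, 13, 17, 3, 11, 20),
  (11, 14, 18, 4, 12, 0),
  (12, 15, 19, 5, 13, 1),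
  (13, 16, 20, 6, 14, 2),
  (14, 17, 0, 7, 15, 3),
  (15, 18, 1, 8, 16, 4),
  (16, 19, 2, 9, 17, 5),
  (17, 20, 3, 10, 18, 6),
  (18, 0, 4, 11, 19, 7),
  (19, 1, 5, 12, 20, 8),
  (20, 2, 6, 13, 0, 9)]

def T2 : List V6 := [
  (0, 11, 5, 17, 4, 1),
  (0, 6, 5, 14, 1, 2),
  (0, 20, 19, 12, 15, 3),
  (0, 19, 13, 2, 7, 4),
  (0, 16, 10, 17, 13, 5),
  (0, 14, 6, 12, 11, 7),
  (0, 17, 2, 19, 3, 8),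
  (0, 18, 3, 20, 7, 9),
  (0, 12, 9, 3, 13, 10),
  (0, 15, 2, 4, 12, 13),
  (1, 20, 4, 9, 2, 3),
  (1, 17, 7, 16, 3, 5),
  (1, 13, 14, 12, 16, 6),
  (1, 18, 11, 20, 15, 7),
  (1, 11, 16, 17, 20, 8),
  (1, 16, 5, 12, 10, 9),
  (1, 15, 18, 7, 6, 10),
  (1, 19, 11, 10, 2, 12),
  (2, 18, 9, 13, 4, 5),
  (2, 11, 3, 14, 20, 6),
  (2, 14, 18, 17, 19, 8),
  (2, 20, 5, 8, 18, 16),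
  (3, 12, 20, 13, 6, 4),
  (3, 10, 19, 5, 9, 6),
  (3, 17, 9, 11, 8, 7),
  (4, 18, 19, 16, 13, 8),
  (4, 19, 6, 17, 8, 10),
  (4, 15, 8, 9, 14, 11),
  (4, 16, 9, 20, 10, 14),
  (5, 10, 15, 11, 13, 7),
  (5, 18, 6, 11, 17, 15),
  (6, 15, 9, 19, 14, 8),
  (7, 14, 16, 20, 18, 10),
  (7, 19, 15, 14, 17, 12),
  (8, 16, 15, 13, 18, 12)]

def DD (T : List V6) : Set (Set (Sym2 (Fin 21))) := {S | ∃ t ∈ T, S = cycSet t}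

lemma nodup1' : T1.all distinctB = true := by rfl
lemma nodup2' : T2.all distinctB = true := by rfl

lemma nodup1 : ∀ t ∈ T1, (vlist t).Nodup :=
  fun t ht => vlist_nodup_of t (List.all_eq_true.mp nodup1' t ht)
lemma nodup2 : ∀ t ∈ T2, (vlist t).Nodup :=
  fun t ht => vlist_nodup_of t (List.all_eq_true.mp nodup2' t ht)

set_option maxRecDepth 100000 in
set_option maxHeartbeats 4000000 in
lemma key1 : ∀ x y : Fin 21, x ≠ y → T1.countP (memP x y) = 1 := by decide

set_option maxRecDepth 100000 in
set_option maxHeartbeats 4000000 in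
lemma key2 : ∀ x y : Fin 21, x ≠ y → T2.countP (memP x y) = 1 := by decide

set_option maxRecDepth 100000 in
set_option maxHeartbeats 4000000 in
lemma keyOrth' : (T1.all fun t => T2.all fun t' =>
    (epairs t).countP (fun p => memP p.1 p.2 t') ≤ 1) = true := by rfl

lemma keyOrth : ∀ t ∈ T1, ∀ t' ∈ T2,
    (epairs t).countP (fun p => memP p.1 p.2 t') ≤ 1 := by
  intro t ht t' ht'
  exact of_decide_eq_true (List.all_eq_true.mp (List.all_eq_true.mp keyOrth' t ht) t' ht')

lemma decomp (T : List V6) (hnd : ∀ t ∈ T, (vlist t).Nodup)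
    (hkey : ∀ x y : Fin 21, x ≠ y → T.countP (memP x y) = 1) :
    IsCycleDecomposition (⊤ : SimpleGraph (Fin 21)) 6 (DD T) := by
  constructor
  · rintro C ⟨t, ht, rfl⟩
    refine ⟨isCycleEdgeSet_cyc t (hnd t ht), ?_⟩
    intro e he
    rw [SimpleGraph.edgeSet_top]
    simp only [cycSet, cycL, List.mem_map, Set.mem_setOf_eq] at he
    obtain ⟨p, hp, rfl⟩ := he
    have hne : p.1 ≠ p.2 := by
      obtain ⟨a, b, c, d, e', f⟩ := t
      have := hnd _ ht
      simp only [vlist, List.nodup_cons, List.mem_cons, List.mem_singleton,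
        List.not_mem_nil, or_false, not_or, List.nodup_nil, and_true] at this
      simp only [epairs, List.mem_cons, List.not_mem_nil, or_false] at hp
      rcases hp with h | h | h | h | h | h <;> subst h <;> simp <;> tauto
    simpa using hne
  · intro e he
    induction e using Sym2.ind with
    | _ x y =>
      rw [SimpleGraph.mem_edgeSet, SimpleGraph.top_adj] at he
      have hcnt := hkey x y he
      obtain ⟨t₀, ht₀, hp₀⟩ := exists_of_countP_eq_one hcnt
      refine ⟨cycSet t₀, ⟨⟨t₀, ht₀, rfl⟩, ?_⟩, ?_⟩
      · exact (mem_cycL_iff x y t₀).mpr hp₀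
      · rintro C ⟨⟨t, ht, rfl⟩, hmem⟩
        have hpt : memP x y t := (mem_cycL_iff x y t).mp hmem
        rw [unique_of_countP_eq_one hcnt ht ht₀ hpt hp₀]

lemma orth : OrthogonalDecompositions (DD T1) (DD T2) := by
  rintro C₁ ⟨t, ht, rfl⟩ C₂ ⟨t', ht', rfl⟩
  have hle := keyOrth t ht t' ht'
  intro a ⟨ha1, ha2⟩ b ⟨hb1, hb2⟩
  by_contra hne
  simp only [cycSet, cycL, List.mem_map, Set.mem_setOf_eq] at ha1 hb1
  obtain ⟨p, hp, rfl⟩ := ha1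
  obtain ⟨q, hq, rfl⟩ := hb1
  have hpa : memP p.1 p.2 t' := (mem_cycL_iff p.1 p.2 t').mp ha2
  have hqa : memP q.1 q.2 t' := (mem_cycL_iff q.1 q.2 t').mp hb2
  have hpq : p ≠ q := fun h => hne (by rw [h])
  have hp' : p ∈ (epairs t).filter (fun p => memP p.1 p.2 t') := List.mem_filter.mpr ⟨hp, hpa⟩
  have hq' : q ∈ (epairs t).filter (fun p => memP p.1 p.2 t') := List.mem_filter.mpr ⟨hq, hqa⟩
  have h2 := two_le_length_of_mem hp' hq' hpq
  rw [← List.countP_eq_length_filter] at h2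
  omega

theorem orthogonal_six_cycle_systems_order_21 :
    ∃ D₁ D₂ : Set (Set (Sym2 (Fin 21))),
      IsCycleDecomposition (⊤ : SimpleGraph (Fin 21)) 6 D₁ ∧
      IsCycleDecomposition (⊤ : SimpleGraph (Fin 21)) 6 D₂ ∧
      OrthogonalDecompositions D₁ D₂ := by
  exact ⟨DD T1, DD T2, decomp T1 nodup1 key1, decomp T2 nodup2 key2, orth⟩
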